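/- Let f be a pdf supported on [−1/4, 1/4]. Then 2(Re f̂(1))² − 1 ≤ Re f̂(2) ≤ 2 Re f̂(1) − 1. -/

import Mathlib

open MeasureTheory
/-- Convolution of two functions on the circle `𝕋 = ℝ/ℤ` (with its Haar measure). -/
noncomputable def conv (f g : UnitAddCircle → ℝ) (c : UnitAddCircle) : ℝ := ∫ x, f x * g (c - x)

/-- A pdf on the circle: a nonnegative function in `L²` with integral 1. -/
def IsPdf (f : UnitAddCircle → ℝ) : Prop :=
  (∀ x, 0 ≤ f x) ∧ MeasureTheory.MemLp f 2 volume ∧ (∫ x, f x) = 1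

/-- The function `f` on the circle is supported on (the image of) `[-1/4, 1/4]`. -/
def SuppIn (f : UnitAddCircle → ℝ) : Prop :=
  ∀ x : UnitAddCircle, f x ≠ 0 → ∃ r : ℝ, |r| ≤ 1/4 ∧ (r : UnitAddCircle) = x

/-- The essential supremum (`L^∞` norm) of a function on the circle. -/
noncomputable def normInf (h : UnitAddCircle → ℝ) : ℝ := (eLpNorm h ⊤ volume).toReal

/-- The square of the `L²` norm of a function on the circle. -/
noncomputable def norm2sq (h : UnitAddCircle → ℝ) : ℝ := ∫ x, (h x)^2

/-- The `j`-th Fourier coefficient of a real function on the circle. -/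
noncomputable def fc (f : UnitAddCircle → ℝ) (j : ℤ) : ℂ := fourierCoeff (fun x => (f x : ℂ)) j

open Real Complex

theorem fhat_f1_f2_domain (f : UnitAddCircle → ℝ) (hf : IsPdf f) (hsupp : SuppIn f) :
    2 * (fc f 1).re ^ 2 - 1 ≤ (fc f 2).re ∧ (fc f 2).re ≤ 2 * (fc f 1).re - 1 := by
  obtain ⟨hpos, hL2, hone⟩ := hf
  set g : UnitAddCircle → ℝ := fun x => (fourier (-1 : ℤ) x).re with hgdef
  have hgcont : Continuous g := Complex.continuous_re.comp (fourier (-1 : ℤ)).continuous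
  have hhaar : (AddCircle.haarAddCircle : Measure UnitAddCircle) = volume := by
    rw [AddCircle.volume_eq_smul_haarAddCircle]; simp
  have hInt : Integrable f volume := hL2.integrable (by norm_num)
  -- Fourier coefficient real part as an integral
  have key : ∀ j : ℤ, (fc f j).re = ∫ x, (fourier (-j) x).re * f x := by
    intro j
    have hic : Integrable (fun x : UnitAddCircle => fourier (-j) x * (f x : ℂ)) volume :=
      hInt.ofReal.bdd_mul (fourier (-j)).continuous.aestronglyMeasurable
        (c := 1) (Filter.Eventually.of_forall fun x => by rw [fourier_apply]; simp [Circle.norm_coe])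
    have h := integral_re hic
    simp only [RCLike.re_to_complex] at h
    rw [fc, fourierCoeff]
    simp_rw [smul_eq_mul, hhaar]
    rw [← h]
    congr 1
    ext x
    simp [Complex.mul_re]
  have habs : ∀ x, |g x| ≤ 1 := fun x => by
    refine (Complex.abs_re_le_norm _).trans ?_
    rw [fourier_apply]; simp [Circle.norm_coe]
  have hbd : ∀ x, g x ≤ 1 := fun x => (le_abs_self _).trans (habs x)
  have hdouble : ∀ x : UnitAddCircle, (fourier (-2 : ℤ) x).re = 2 * g x ^ 2 - 1 := by
    intro x
    have h2 : (-2 : ℤ) = (-1) + (-1) := by norm_num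
    have hns : Complex.normSq (fourier (-1 : ℤ) x) = 1 := by
      rw [fourier_apply]; exact Circle.normSq_coe _
    rw [Complex.normSq_apply] at hns
    rw [h2, fourier_add, Complex.mul_re]
    have : g x = (fourier (-1 : ℤ) x).re := rfl
    nlinarith [hns]
  have hgcoe : ∀ r : ℝ, g (r : UnitAddCircle) = Real.cos (2 * π * r) := by
    intro r
    have h1 : (2 * (π : ℂ) * Complex.I * ((-1 : ℤ) : ℂ) * (r : ℂ) / ((1:ℝ) : ℂ))
        = ((-(2 * π * r) : ℝ) : ℂ) * Complex.I := by push_cast; ring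
    show (fourier (-1 : ℤ) (r : UnitAddCircle)).re = _
    rw [fourier_coe_apply, h1, Complex.exp_ofReal_mul_I_re, Real.cos_neg]
  -- integrability of products
  have hIg : Integrable (fun x => g x * f x) volume :=
    hInt.bdd_mul hgcont.aestronglyMeasurable (c := 1) (Filter.Eventually.of_forall fun x => habs x)
  have hIg2 : Integrable (fun x => (2 * g x ^ 2 - 1) * f x) volume := by
    refine hInt.bdd_mul
      ((continuous_const.mul (hgcont.pow 2)).sub continuous_const).aestronglyMeasurable
      (c := 3) (Filter.Eventually.of_forall fun x => ?_)
    have h1 := habs x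
    have h2 := abs_nonneg (g x)
    have h3 : g x ^ 2 ≤ 1 := by nlinarith [_root_.sq_abs (g x)]
    rw [Real.norm_eq_abs, abs_le]
    constructor <;> nlinarith [sq_nonneg (g x)]
  set a : ℝ := ∫ x, g x * f x with ha
  have hfc1 : (fc f 1).re = a := key 1
  have hfc2 : (fc f 2).re = ∫ x, (2 * g x ^ 2 - 1) * f x := by
    rw [key 2]; congr 1; ext x; rw [hdouble x]
  constructor
  · -- lower bound
    rw [hfc2, hfc1]
    have hmono : (∫ x, (4 * a * (g x * f x) - (2 * a ^ 2 + 1) * f x)) ≤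
        ∫ x, (2 * g x ^ 2 - 1) * f x := by
      refine integral_mono ((hIg.const_mul (4 * a)).sub (hInt.const_mul (2 * a ^ 2 + 1))) hIg2 ?_
      intro x
      dsimp only
      nlinarith [mul_nonneg (hpos x) (sq_nonneg (g x - a))]
    calc 2 * a ^ 2 - 1 = 4 * a * a - (2 * a ^ 2 + 1) * 1 := by ring
      _ = ∫ x, (4 * a * (g x * f x) - (2 * a ^ 2 + 1) * f x) := by
          rw [integral_sub (hIg.const_mul (4 * a)) (hInt.const_mul (2 * a ^ 2 + 1)),
            integral_const_mul, integral_const_mul, hone, ← ha]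
      _ ≤ _ := hmono
  · -- upper bound
    rw [hfc2, hfc1]
    have hmono : (∫ x, (2 * g x ^ 2 - 1) * f x) ≤ ∫ x, (2 * (g x * f x) - f x) := by
      refine integral_mono hIg2 ((hIg.const_mul 2).sub hInt) ?_
      intro x
      dsimp only
      rcases eq_or_ne (f x) 0 with h | h
      · simp [h]
      · obtain ⟨r, hr, hrx⟩ := hsupp x h
        have hg0 : 0 ≤ g x := by
          rw [← hrx, hgcoe r]
          apply Real.cos_nonneg_of_mem_Icc
          rw [abs_le] at hr
          constructor <;> nlinarith [Real.pi_pos]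
        nlinarith [mul_nonneg (hpos x) (mul_nonneg hg0 (sub_nonneg.2 (hbd x)))]
    calc (∫ x, (2 * g x ^ 2 - 1) * f x) ≤ ∫ x, (2 * (g x * f x) - f x) := hmono
      _ = 2 * a - 1 := by
          rw [integral_sub (hIg.const_mul 2) hInt, integral_const_mul, hone, ← ha]
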